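/- Let G be a graph obtained as follows: take a single vertex v, graphs A₁, …, A_t each isomorphic to some C_{s,k} with s ∈ {3,4,5} and k ∈ {1,2,3}, and graphs B₁, …, B_s each isomorphic to a cycle C₃, C₄ or C₅, where s, t ≥ 0 and s + t ≥ 2; identify the leaf of each Aᵢ with v and identify one vertex of each Bᵢ with v. If |V(G)| ≥ 9, then γ₂ᵈ(G) ≤ |V(G)|/3. -/

import Mathlib

def IsDisjDomSet {V : Type*} (G : SimpleGraph V) (D : Set V) : Prop :=
  ∀ v : V, v ∉ D → (∃ u ∈ D, G.Adj v u) ∨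
    (∃ u ∈ D, ∃ w ∈ D, u ≠ w ∧ G.dist v u = 2 ∧ G.dist v w = 2)

noncomputable def disjDomNum {V : Type*} (G : SimpleGraph V) : ℕ :=
  sInf {n : ℕ | ∃ D : Set V, IsDisjDomSet G D ∧ D.ncard = n}

/-- The tadpole graph `C_{s,k}` (for `s ≥ 3`, `k ≥ 1`): a cycle on the vertices
`0, 1, …, s-1` together with a pendant path `0 – s – (s+1) – ⋯ – (s+k-1)` attached at the
cycle vertex `0`.  The vertex `s+k-1` is the leaf of `C_{s,k}`. -/
def tadpoleGraph (s k : ℕ) : SimpleGraph (Fin (s + k)) :=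
  SimpleGraph.fromRel (fun a b =>
    ((a : ℕ) + 1 = (b : ℕ) ∧ (b : ℕ) < s) ∨ ((a : ℕ) = s - 1 ∧ (b : ℕ) = 0) ∨
    ((a : ℕ) = 0 ∧ (b : ℕ) = s) ∨ (s ≤ (a : ℕ) ∧ (a : ℕ) + 1 = (b : ℕ)))

/-- Let `G` be a graph obtained as follows: take a single vertex `v` and finitely many
gadgets (indexed by `ι`, at least two of them, with vertex sets `P i ∪ {v}` partitioning
`V(G)` so that distinct gadgets meet only in `v` and there are no edges between distinct
gadgets), each gadget being either a tadpole `C_{s,k}` with `s ∈ {3,4,5}`, `k ∈ {1,2,3}`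
whose leaf is identified with `v`, or a cycle `C₃`, `C₄` or `C₅` with one vertex identified
with `v`.  If `|V(G)| ≥ 9`, then `γ₂ᵈ(G) ≤ |V(G)|/3`. -/
instance (s k : ℕ) : DecidableRel (tadpoleGraph s k).Adj := fun a b =>
  decidable_of_iff' _ (SimpleGraph.fromRel_adj _ a b)

lemma dist_eq_two' {V : Type*} {G : SimpleGraph V} {a b c : V} (h1 : G.Adj a c) (h2 : G.Adj c b)
    (hna : ¬ G.Adj a b) (hne : a ≠ b) : G.dist a b = 2 := by
  have hr : G.Reachable a b := ⟨h1.toWalk.append h2.toWalk⟩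
  have hle : G.dist a b ≤ 2 := by
    simpa using SimpleGraph.dist_le (h1.toWalk.append h2.toWalk)
  have h0 : G.dist a b ≠ 0 := Nat.pos_iff_ne_zero.mp (hr.pos_dist_of_ne hne)
  have h1' : G.dist a b ≠ 1 := fun h => hna (SimpleGraph.dist_eq_one_iff_adj.mp h)
  omega

section Machinery
variable {V : Type*} {G : SimpleGraph V} {v : V} {P : Set V} {n : ℕ} {H : SimpleGraph (Fin n)}

def gvert (G : SimpleGraph V) (v : V) (P : Set V) (e : G.induce (P ∪ {v}) ≃g H) (a : Fin n) : V :=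
  ((e.symm a : ↥(P ∪ {v})) : V)

variable (e : G.induce (P ∪ {v}) ≃g H)

lemma loc_adj (a b : Fin n) : G.Adj (gvert G v P e a) (gvert G v P e b) ↔ H.Adj a b := by
  rw [← e.symm.map_adj_iff]
  rfl

lemma loc_inj : Function.Injective (gvert G v P e) := fun a b h => by
  have := e.symm.injective (Subtype.val_injective h)
  exact this

lemma loc_v : gvert G v P e (e ⟨v, Or.inr rfl⟩) = v := by
  simp [gvert]

lemma loc_mem {a : Fin n} (h : a ≠ e ⟨v, Or.inr rfl⟩) : gvert G v P e a ∈ P := by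
  have hm : gvert G v P e a ∈ P ∪ {v} := (e.symm a).2
  rcases hm with hm | hm
  · exact hm
  · exact absurd (loc_inj e ((show gvert G v P e a = v from hm).trans (loc_v e).symm)) h

lemma loc_ne_v (hvP : v ∉ P) {a : Fin n} (h : a ≠ e ⟨v, Or.inr rfl⟩) : gvert G v P e a ≠ v :=
  fun hh => hvP (hh ▸ loc_mem e h)

lemma loc_surj (hvP : v ∉ P) {x : V} (hx : x ∈ P) :
    ∃ a : Fin n, a ≠ e ⟨v, Or.inr rfl⟩ ∧ gvert G v P e a = x := by
  refine ⟨e ⟨x, Or.inl hx⟩, fun h => ?_, by simp [gvert]⟩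
  have := e.injective h
  replace this : x = v := congrArg Subtype.val this
  exact hvP (this ▸ hx)

include e in
lemma loc_card (hvP : v ∉ P) : P.ncard + 1 = n := by
  have hfc : Finite ↥(P ∪ {v}) := Finite.of_equiv (Fin n) (RelIso.toEquiv e).symm
  have hfin : (P ∪ {v}).Finite := Set.finite_coe_iff.mp hfc
  have hfinP : P.Finite := hfin.subset Set.subset_union_left
  have h1 : (P ∪ {v}).ncard = n := by
    have : Nat.card ↥(P ∪ {v}) = Nat.card (Fin n) := Nat.card_congr (RelIso.toEquiv e)
    simpa [Nat.card_coe_set_eq] using this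
  have h2 : (P ∪ {v}).ncard = P.ncard + 1 := by
    rw [Set.union_singleton, Set.ncard_insert_of_notMem hvP hfinP]
  omega

lemma loc_dist2 {a b c : Fin n} (h1 : H.Adj a c) (h2 : H.Adj c b) (h3 : ¬ H.Adj a b)
    (h4 : a ≠ b) : G.dist (gvert G v P e a) (gvert G v P e b) = 2 :=
  dist_eq_two' ((loc_adj e a c).mpr h1) ((loc_adj e c b).mpr h2)
    (fun h => h3 ((loc_adj e a b).mp h)) (fun h => h4 (loc_inj e h))

end Machinery

section Doms
variable {V : Type*} (G : SimpleGraph V) (v : V) (S : Set V) (x : V)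

def Dom1 : Prop :=
  (∃ u ∈ S, G.Adj x u) ∨ G.Adj x v ∨
    (∃ u ∈ S, ∃ w ∈ S ∪ {v}, u ≠ w ∧ G.dist x u = 2 ∧ G.dist x w = 2)

def DomSelf : Prop :=
  (∃ u ∈ S, G.Adj x u) ∨ (∃ u ∈ S, ∃ w ∈ S, u ≠ w ∧ G.dist x u = 2 ∧ G.dist x w = 2)

def DomNeedy : Prop :=
  DomSelf G S x ∨ (G.Adj x v ∧ ∃ u ∈ S, G.dist x u = 2)

variable {G v S x}

lemma DomSelf.dom1 (h : DomSelf G S x) : Dom1 G v S x := by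
  rcases h with h | ⟨u, hu, w, hw, h⟩
  · exact Or.inl h
  · exact Or.inr (Or.inr ⟨u, hu, w, Or.inl hw, h⟩)

lemma DomNeedy.dom1 (h : DomNeedy G v S x) : Dom1 G v S x := by
  rcases h with h | ⟨h, _⟩
  · exact h.dom1
  · exact Or.inr (Or.inl h)

end Doms

section Certs
variable {V : Type*} {G : SimpleGraph V} {v : V} {P : Set V}

lemma cert_t41 (hvP : v ∉ P) (e : G.induce (P ∪ {v}) ≃g tadpoleGraph 4 1)
    (hleaf : ((e ⟨v, Or.inr rfl⟩ : Fin (4 + 1)) : ℕ) = 4 + 1 - 1) :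
    ∃ S : Set V, S ⊆ P ∧ S.ncard = 1 ∧ P.ncard = 4 ∧
      ∀ x ∈ P, x ∉ S → DomNeedy G v S x := by
  have hL : (e ⟨v, Or.inr rfl⟩) = (4 : Fin 5) := Fin.ext (by simpa using hleaf)
  have hgv : gvert G v P e 4 = v := by rw [← hL]; exact loc_v e
  refine ⟨{gvert G v P e 2}, ?_, Set.ncard_singleton _, ?_, ?_⟩
  · simp only [Set.singleton_subset_iff]
    exact loc_mem e (by rw [hL]; decide)
  · have := loc_card e hvP; omega
  · intro x hx hxS
    obtain ⟨a, ha, rfl⟩ := loc_surj e hvP hx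
    rw [hL] at ha
    have ha2 : a ≠ 2 := fun h => hxS (by rw [h]; exact rfl)
    have hcases : a = 0 ∨ a = 1 ∨ a = 3 :=
      (by decide : ∀ a : Fin 5, a ≠ 4 → a ≠ 2 → a = 0 ∨ a = 1 ∨ a = 3) a ha ha2
    rcases hcases with rfl | rfl | rfl
    · have hadj := (loc_adj e 0 4).mpr (by decide)
      rw [hgv] at hadj
      refine Or.inr ⟨hadj, gvert G v P e 2, rfl, ?_⟩
      exact loc_dist2 e (by decide : (tadpoleGraph 4 1).Adj 0 1) (by decide) (by decide) (by decide)
    · exact Or.inl (Or.inl ⟨_, rfl, (loc_adj e 1 2).mpr (by decide)⟩)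
    · exact Or.inl (Or.inl ⟨_, rfl, (loc_adj e 3 2).mpr (by decide)⟩)

lemma cert_c4 (hvP : v ∉ P) (e : G.induce (P ∪ {v}) ≃g SimpleGraph.cycleGraph 4) :
    (∃ S : Set V, S ⊆ P ∧ S.ncard = 1 ∧ P.ncard = 3 ∧
      (∀ x ∈ P, x ∉ S → DomSelf G S x) ∧ (∃ u ∈ S, G.dist v u = 2)) ∧
    (∃ S : Set V, S ⊆ P ∧ S.ncard = 1 ∧
      (∀ x ∈ P, x ∉ S → DomNeedy G v S x) ∧ (∃ u ∈ S, G.Adj v u)) := by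
  set L := e ⟨v, Or.inr rfl⟩ with hLdef
  have hgv : gvert G v P e L = v := loc_v e
  constructor
  · refine ⟨{gvert G v P e (L + 2)}, ?_, Set.ncard_singleton _, ?_, ?_, ?_⟩
    · simp only [Set.singleton_subset_iff]
      exact loc_mem e ((by decide : ∀ L : Fin 4, L + 2 ≠ L) L)
    · have := loc_card e hvP; omega
    · intro x hx hxS
      obtain ⟨a, ha, rfl⟩ := loc_surj e hvP hx
      have ha2 : a ≠ L + 2 := fun h => hxS (by rw [h]; exact rfl)
      have hcases : a = L + 1 ∨ a = L + 3 :=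
        (by decide : ∀ L a : Fin 4, a ≠ L → a ≠ L + 2 → a = L + 1 ∨ a = L + 3) L a ha ha2
      rcases hcases with rfl | rfl
      · exact Or.inl ⟨_, rfl, (loc_adj e _ _).mpr
          ((by decide : ∀ L : Fin 4, (SimpleGraph.cycleGraph 4).Adj (L+1) (L+2)) L)⟩
      · exact Or.inl ⟨_, rfl, (loc_adj e _ _).mpr
          ((by decide : ∀ L : Fin 4, (SimpleGraph.cycleGraph 4).Adj (L+3) (L+2)) L)⟩
    · have hd := loc_dist2 e
        ((by decide : ∀ L : Fin 4, (SimpleGraph.cycleGraph 4).Adj L (L+1)) L)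
        ((by decide : ∀ L : Fin 4, (SimpleGraph.cycleGraph 4).Adj (L+1) (L+2)) L)
        ((by decide : ∀ L : Fin 4, ¬ (SimpleGraph.cycleGraph 4).Adj L (L+2)) L)
        ((by decide : ∀ L : Fin 4, L ≠ L + 2) L)
      rw [hgv] at hd
      exact ⟨_, rfl, hd⟩
  · refine ⟨{gvert G v P e (L + 1)}, ?_, Set.ncard_singleton _, ?_, ?_⟩
    · simp only [Set.singleton_subset_iff]
      exact loc_mem e ((by decide : ∀ L : Fin 4, L + 1 ≠ L) L)
    · intro x hx hxS
      obtain ⟨a, ha, rfl⟩ := loc_surj e hvP hx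
      have ha1 : a ≠ L + 1 := fun h => hxS (by rw [h]; exact rfl)
      have hcases : a = L + 2 ∨ a = L + 3 :=
        (by decide : ∀ L a : Fin 4, a ≠ L → a ≠ L + 1 → a = L + 2 ∨ a = L + 3) L a ha ha1
      rcases hcases with rfl | rfl
      · exact Or.inl (Or.inl ⟨_, rfl, (loc_adj e _ _).mpr
          ((by decide : ∀ L : Fin 4, (SimpleGraph.cycleGraph 4).Adj (L+2) (L+1)) L)⟩)
      · have hadj := (loc_adj e (L+3) L).mpr
          ((by decide : ∀ L : Fin 4, (SimpleGraph.cycleGraph 4).Adj (L+3) L) L)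
        rw [hgv] at hadj
        exact Or.inr ⟨hadj, _, rfl,
          loc_dist2 e
            ((by decide : ∀ L : Fin 4, (SimpleGraph.cycleGraph 4).Adj (L+3) (L+2)) L)
            ((by decide : ∀ L : Fin 4, (SimpleGraph.cycleGraph 4).Adj (L+2) (L+1)) L)
            ((by decide : ∀ L : Fin 4, ¬ (SimpleGraph.cycleGraph 4).Adj (L+3) (L+1)) L)
            ((by decide : ∀ L : Fin 4, L + 3 ≠ L + 1) L)⟩
    · have hadj := (loc_adj e L (L+1)).mpr
        ((by decide : ∀ L : Fin 4, (SimpleGraph.cycleGraph 4).Adj L (L+1)) L)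
      rw [hgv] at hadj
      exact ⟨_, rfl, hadj⟩

lemma cert_t31 (hvP : v ∉ P) (e : G.induce (P ∪ {v}) ≃g tadpoleGraph 3 1)
    (hleaf : ((e ⟨v, Or.inr rfl⟩ : Fin (3 + 1)) : ℕ) = 3 + 1 - 1) :
    ∃ S : Set V, S ⊆ P ∧ S.ncard = 1 ∧ P.ncard = 3 ∧
      (∀ x ∈ P, x ∉ S → DomSelf G S x) ∧ (∃ u ∈ S, G.Adj v u) := by
  have hL : (e ⟨v, Or.inr rfl⟩) = (3 : Fin 4) := Fin.ext (by simpa using hleaf)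
  have hgv : gvert G v P e 3 = v := by rw [← hL]; exact loc_v e
  refine ⟨{gvert G v P e 0}, ?_, Set.ncard_singleton _, ?_, ?_, ?_⟩
  · simp only [Set.singleton_subset_iff]
    exact loc_mem e (by rw [hL]; decide)
  · have := loc_card e hvP; omega
  · intro x hx hxS
    obtain ⟨a, ha, rfl⟩ := loc_surj e hvP hx
    rw [hL] at ha
    have ha0 : a ≠ 0 := fun h => hxS (by rw [h]; exact rfl)
    have hcases : a = 1 ∨ a = 2 :=
      (by decide : ∀ a : Fin 4, a ≠ 3 → a ≠ 0 → a = 1 ∨ a = 2) a ha ha0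
    rcases hcases with rfl | rfl
    · exact Or.inl ⟨_, rfl, (loc_adj e 1 0).mpr (by decide)⟩
    · exact Or.inl ⟨_, rfl, (loc_adj e 2 0).mpr (by decide)⟩
  · have hadj := (loc_adj e 3 0).mpr (by decide)
    rw [hgv] at hadj
    exact ⟨_, rfl, hadj⟩

lemma cert_t32 (hvP : v ∉ P) (e : G.induce (P ∪ {v}) ≃g tadpoleGraph 3 2)
    (hleaf : ((e ⟨v, Or.inr rfl⟩ : Fin (3 + 2)) : ℕ) = 3 + 2 - 1) :
    ∃ S : Set V, S ⊆ P ∧ S.ncard = 1 ∧ P.ncard = 4 ∧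
      (∀ x ∈ P, x ∉ S → DomSelf G S x) ∧ (∃ u ∈ S, G.dist v u = 2) := by
  have hL : (e ⟨v, Or.inr rfl⟩) = (4 : Fin 5) := Fin.ext (by simpa using hleaf)
  have hgv : gvert G v P e 4 = v := by rw [← hL]; exact loc_v e
  refine ⟨{gvert G v P e 0}, ?_, Set.ncard_singleton _, ?_, ?_, ?_⟩
  · simp only [Set.singleton_subset_iff]
    exact loc_mem e (by rw [hL]; decide)
  · have := loc_card e hvP; omega
  · intro x hx hxS
    obtain ⟨a, ha, rfl⟩ := loc_surj e hvP hx
    rw [hL] at ha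
    have ha0 : a ≠ 0 := fun h => hxS (by rw [h]; exact rfl)
    have hcases : a = 1 ∨ a = 2 ∨ a = 3 :=
      (by decide : ∀ a : Fin 5, a ≠ 4 → a ≠ 0 → a = 1 ∨ a = 2 ∨ a = 3) a ha ha0
    rcases hcases with rfl | rfl | rfl
    · exact Or.inl ⟨_, rfl, (loc_adj e 1 0).mpr (by decide)⟩
    · exact Or.inl ⟨_, rfl, (loc_adj e 2 0).mpr (by decide)⟩
    · exact Or.inl ⟨_, rfl, (loc_adj e 3 0).mpr (by decide)⟩
  · have hd := loc_dist2 e (by decide : (tadpoleGraph 3 2).Adj 4 3) (by decide : (tadpoleGraph 3 2).Adj 3 0)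
      (by decide) (by decide)
    rw [hgv] at hd
    exact ⟨_, rfl, hd⟩

lemma cert_t33 (hvP : v ∉ P) (e : G.induce (P ∪ {v}) ≃g tadpoleGraph 3 3)
    (hleaf : ((e ⟨v, Or.inr rfl⟩ : Fin (3 + 3)) : ℕ) = 3 + 3 - 1) :
    ∃ S : Set V, S ⊆ P ∧ S.ncard = 1 ∧ P.ncard = 5 ∧
      (∀ x ∈ P, x ∉ S → Dom1 G v S x) := by
  have hL : (e ⟨v, Or.inr rfl⟩) = (5 : Fin 6) := Fin.ext (by simpa using hleaf)
  have hgv : gvert G v P e 5 = v := by rw [← hL]; exact loc_v e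
  refine ⟨{gvert G v P e 0}, ?_, Set.ncard_singleton _, ?_, ?_⟩
  · simp only [Set.singleton_subset_iff]
    exact loc_mem e (by rw [hL]; decide)
  · have := loc_card e hvP; omega
  · intro x hx hxS
    obtain ⟨a, ha, rfl⟩ := loc_surj e hvP hx
    rw [hL] at ha
    have ha0 : a ≠ 0 := fun h => hxS (by rw [h]; exact rfl)
    have hcases : a = 1 ∨ a = 2 ∨ a = 3 ∨ a = 4 :=
      (by decide : ∀ a : Fin 6, a ≠ 5 → a ≠ 0 → a = 1 ∨ a = 2 ∨ a = 3 ∨ a = 4) a ha ha0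
    rcases hcases with rfl | rfl | rfl | rfl
    · exact Or.inl ⟨_, rfl, (loc_adj e 1 0).mpr (by decide)⟩
    · exact Or.inl ⟨_, rfl, (loc_adj e 2 0).mpr (by decide)⟩
    · exact Or.inl ⟨_, rfl, (loc_adj e 3 0).mpr (by decide)⟩
    · have hadj := (loc_adj e 4 5).mpr (by decide)
      rw [hgv] at hadj
      exact Or.inr (Or.inl hadj)

lemma cert_t42 (hvP : v ∉ P) (e : G.induce (P ∪ {v}) ≃g tadpoleGraph 4 2)
    (hleaf : ((e ⟨v, Or.inr rfl⟩ : Fin (4 + 2)) : ℕ) = 4 + 2 - 1) :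
    ∃ S : Set V, S ⊆ P ∧ S.ncard = 1 ∧ P.ncard = 5 ∧
      (∀ x ∈ P, x ∉ S → Dom1 G v S x) := by
  have hL : (e ⟨v, Or.inr rfl⟩) = (5 : Fin 6) := Fin.ext (by simpa using hleaf)
  have hgv : gvert G v P e 5 = v := by rw [← hL]; exact loc_v e
  refine ⟨{gvert G v P e 2}, ?_, Set.ncard_singleton _, ?_, ?_⟩
  · simp only [Set.singleton_subset_iff]
    exact loc_mem e (by rw [hL]; decide)
  · have := loc_card e hvP; omega
  · intro x hx hxS
    obtain ⟨a, ha, rfl⟩ := loc_surj e hvP hx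
    rw [hL] at ha
    have ha2 : a ≠ 2 := fun h => hxS (by rw [h]; exact rfl)
    have hcases : a = 0 ∨ a = 1 ∨ a = 3 ∨ a = 4 :=
      (by decide : ∀ a : Fin 6, a ≠ 5 → a ≠ 2 → a = 0 ∨ a = 1 ∨ a = 3 ∨ a = 4) a ha ha2
    rcases hcases with rfl | rfl | rfl | rfl
    · have hd1 := loc_dist2 e (by decide : (tadpoleGraph 4 2).Adj 0 1)
        (by decide : (tadpoleGraph 4 2).Adj 1 2) (by decide) (by decide)
      have hd2 := loc_dist2 e (by decide : (tadpoleGraph 4 2).Adj 0 4)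
        (by decide : (tadpoleGraph 4 2).Adj 4 5) (by decide) (by decide)
      rw [hgv] at hd2
      exact Or.inr (Or.inr ⟨_, rfl, v, Or.inr rfl, loc_ne_v e hvP (by rw [hL]; decide), hd1, hd2⟩)
    · exact Or.inl ⟨_, rfl, (loc_adj e 1 2).mpr (by decide)⟩
    · exact Or.inl ⟨_, rfl, (loc_adj e 3 2).mpr (by decide)⟩
    · have hadj := (loc_adj e 4 5).mpr (by decide)
      rw [hgv] at hadj
      exact Or.inr (Or.inl hadj)

lemma cert_t43 (hvP : v ∉ P) (e : G.induce (P ∪ {v}) ≃g tadpoleGraph 4 3)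
    (hleaf : ((e ⟨v, Or.inr rfl⟩ : Fin (4 + 3)) : ℕ) = 4 + 3 - 1) :
    ∃ S : Set V, S ⊆ P ∧ S.ncard = 2 ∧ P.ncard = 6 ∧
      (∀ x ∈ P, x ∉ S → DomSelf G S x) ∧ (∃ u ∈ S, G.Adj v u) := by
  have hL : (e ⟨v, Or.inr rfl⟩) = (6 : Fin 7) := Fin.ext (by simpa using hleaf)
  have hgv : gvert G v P e 6 = v := by rw [← hL]; exact loc_v e
  refine ⟨{gvert G v P e 2, gvert G v P e 5}, ?_, ?_, ?_, ?_, ?_⟩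
  · intro x hx
    simp only [Set.mem_insert_iff, Set.mem_singleton_iff] at hx
    rcases hx with rfl | rfl
    · exact loc_mem e (by rw [hL]; decide)
    · exact loc_mem e (by rw [hL]; decide)
  · exact Set.ncard_pair ((loc_inj e).ne (by decide))
  · have := loc_card e hvP; omega
  · intro x hx hxS
    obtain ⟨a, ha, rfl⟩ := loc_surj e hvP hx
    rw [hL] at ha
    have ha2 : a ≠ 2 := fun h => hxS (by rw [h]; exact Or.inl rfl)
    have ha5 : a ≠ 5 := fun h => hxS (by rw [h]; exact Or.inr rfl)
    have hcases : a = 0 ∨ a = 1 ∨ a = 3 ∨ a = 4 :=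
      (by decide : ∀ a : Fin 7, a ≠ 6 → a ≠ 2 → a ≠ 5 → a = 0 ∨ a = 1 ∨ a = 3 ∨ a = 4) a ha ha2 ha5
    rcases hcases with rfl | rfl | rfl | rfl
    · have hd1 := loc_dist2 e (by decide : (tadpoleGraph 4 3).Adj 0 1)
        (by decide : (tadpoleGraph 4 3).Adj 1 2) (by decide) (by decide)
      have hd2 := loc_dist2 e (by decide : (tadpoleGraph 4 3).Adj 0 4)
        (by decide : (tadpoleGraph 4 3).Adj 4 5) (by decide) (by decide)
      exact Or.inr ⟨_, Or.inl rfl, _, Or.inr rfl, (loc_inj e).ne (by decide), hd1, hd2⟩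
    · exact Or.inl ⟨_, Or.inl rfl, (loc_adj e 1 2).mpr (by decide)⟩
    · exact Or.inl ⟨_, Or.inl rfl, (loc_adj e 3 2).mpr (by decide)⟩
    · exact Or.inl ⟨_, Or.inr rfl, (loc_adj e 4 5).mpr (by decide)⟩
  · have hadj := (loc_adj e 6 5).mpr (by decide)
    rw [hgv] at hadj
    exact ⟨_, Or.inr rfl, hadj⟩

lemma cert_t51 (hvP : v ∉ P) (e : G.induce (P ∪ {v}) ≃g tadpoleGraph 5 1)
    (hleaf : ((e ⟨v, Or.inr rfl⟩ : Fin (5 + 1)) : ℕ) = 5 + 1 - 1) :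
    ∃ S : Set V, S ⊆ P ∧ S.ncard = 1 ∧ P.ncard = 5 ∧
      (∀ x ∈ P, x ∉ S → Dom1 G v S x) := by
  have hL : (e ⟨v, Or.inr rfl⟩) = (5 : Fin 6) := Fin.ext (by simpa using hleaf)
  have hgv : gvert G v P e 5 = v := by rw [← hL]; exact loc_v e
  refine ⟨{gvert G v P e 2}, ?_, Set.ncard_singleton _, ?_, ?_⟩
  · simp only [Set.singleton_subset_iff]
    exact loc_mem e (by rw [hL]; decide)
  · have := loc_card e hvP; omega
  · intro x hx hxS
    obtain ⟨a, ha, rfl⟩ := loc_surj e hvP hx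
    rw [hL] at ha
    have ha2 : a ≠ 2 := fun h => hxS (by rw [h]; exact rfl)
    have hcases : a = 0 ∨ a = 1 ∨ a = 3 ∨ a = 4 :=
      (by decide : ∀ a : Fin 6, a ≠ 5 → a ≠ 2 → a = 0 ∨ a = 1 ∨ a = 3 ∨ a = 4) a ha ha2
    rcases hcases with rfl | rfl | rfl | rfl
    · have hadj := (loc_adj e 0 5).mpr (by decide)
      rw [hgv] at hadj
      exact Or.inr (Or.inl hadj)
    · exact Or.inl ⟨_, rfl, (loc_adj e 1 2).mpr (by decide)⟩
    · exact Or.inl ⟨_, rfl, (loc_adj e 3 2).mpr (by decide)⟩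
    · have hd1 := loc_dist2 e (by decide : (tadpoleGraph 5 1).Adj 4 3)
        (by decide : (tadpoleGraph 5 1).Adj 3 2) (by decide) (by decide)
      have hd2 := loc_dist2 e (by decide : (tadpoleGraph 5 1).Adj 4 0)
        (by decide : (tadpoleGraph 5 1).Adj 0 5) (by decide) (by decide)
      rw [hgv] at hd2
      exact Or.inr (Or.inr ⟨_, rfl, v, Or.inr rfl, loc_ne_v e hvP (by rw [hL]; decide), hd1, hd2⟩)

lemma cert_t52 (hvP : v ∉ P) (e : G.induce (P ∪ {v}) ≃g tadpoleGraph 5 2)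
    (hleaf : ((e ⟨v, Or.inr rfl⟩ : Fin (5 + 2)) : ℕ) = 5 + 2 - 1) :
    ∃ S : Set V, S ⊆ P ∧ S.ncard = 2 ∧ P.ncard = 6 ∧
      (∀ x ∈ P, x ∉ S → DomSelf G S x) ∧ (∃ u ∈ S, G.Adj v u) := by
  have hL : (e ⟨v, Or.inr rfl⟩) = (6 : Fin 7) := Fin.ext (by simpa using hleaf)
  have hgv : gvert G v P e 6 = v := by rw [← hL]; exact loc_v e
  refine ⟨{gvert G v P e 2, gvert G v P e 5}, ?_, ?_, ?_, ?_, ?_⟩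
  · intro x hx
    simp only [Set.mem_insert_iff, Set.mem_singleton_iff] at hx
    rcases hx with rfl | rfl
    · exact loc_mem e (by rw [hL]; decide)
    · exact loc_mem e (by rw [hL]; decide)
  · exact Set.ncard_pair ((loc_inj e).ne (by decide))
  · have := loc_card e hvP; omega
  · intro x hx hxS
    obtain ⟨a, ha, rfl⟩ := loc_surj e hvP hx
    rw [hL] at ha
    have ha2 : a ≠ 2 := fun h => hxS (by rw [h]; exact Or.inl rfl)
    have ha5 : a ≠ 5 := fun h => hxS (by rw [h]; exact Or.inr rfl)
    have hcases : a = 0 ∨ a = 1 ∨ a = 3 ∨ a = 4 :=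
      (by decide : ∀ a : Fin 7, a ≠ 6 → a ≠ 2 → a ≠ 5 → a = 0 ∨ a = 1 ∨ a = 3 ∨ a = 4) a ha ha2 ha5
    rcases hcases with rfl | rfl | rfl | rfl
    · exact Or.inl ⟨_, Or.inr rfl, (loc_adj e 0 5).mpr (by decide)⟩
    · exact Or.inl ⟨_, Or.inl rfl, (loc_adj e 1 2).mpr (by decide)⟩
    · exact Or.inl ⟨_, Or.inl rfl, (loc_adj e 3 2).mpr (by decide)⟩
    · have hd1 := loc_dist2 e (by decide : (tadpoleGraph 5 2).Adj 4 3)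
        (by decide : (tadpoleGraph 5 2).Adj 3 2) (by decide) (by decide)
      have hd2 := loc_dist2 e (by decide : (tadpoleGraph 5 2).Adj 4 0)
        (by decide : (tadpoleGraph 5 2).Adj 0 5) (by decide) (by decide)
      exact Or.inr ⟨_, Or.inl rfl, _, Or.inr rfl, (loc_inj e).ne (by decide), hd1, hd2⟩
  · have hadj := (loc_adj e 6 5).mpr (by decide)
    rw [hgv] at hadj
    exact ⟨_, Or.inr rfl, hadj⟩

lemma cert_t53 (hvP : v ∉ P) (e : G.induce (P ∪ {v}) ≃g tadpoleGraph 5 3)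
    (hleaf : ((e ⟨v, Or.inr rfl⟩ : Fin (5 + 3)) : ℕ) = 5 + 3 - 1) :
    ∃ S : Set V, S ⊆ P ∧ S.ncard = 2 ∧ P.ncard = 7 ∧
      (∀ x ∈ P, x ∉ S → DomSelf G S x) ∧ (∃ u ∈ S, G.dist v u = 2) := by
  have hL : (e ⟨v, Or.inr rfl⟩) = (7 : Fin 8) := Fin.ext (by simpa using hleaf)
  have hgv : gvert G v P e 7 = v := by rw [← hL]; exact loc_v e
  refine ⟨{gvert G v P e 2, gvert G v P e 5}, ?_, ?_, ?_, ?_, ?_⟩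
  · intro x hx
    simp only [Set.mem_insert_iff, Set.mem_singleton_iff] at hx
    rcases hx with rfl | rfl
    · exact loc_mem e (by rw [hL]; decide)
    · exact loc_mem e (by rw [hL]; decide)
  · exact Set.ncard_pair ((loc_inj e).ne (by decide))
  · have := loc_card e hvP; omega
  · intro x hx hxS
    obtain ⟨a, ha, rfl⟩ := loc_surj e hvP hx
    rw [hL] at ha
    have ha2 : a ≠ 2 := fun h => hxS (by rw [h]; exact Or.inl rfl)
    have ha5 : a ≠ 5 := fun h => hxS (by rw [h]; exact Or.inr rfl)
    have hcases : a = 0 ∨ a = 1 ∨ a = 3 ∨ a = 4 ∨ a = 6 :=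
      (by decide : ∀ a : Fin 8, a ≠ 7 → a ≠ 2 → a ≠ 5 →
        a = 0 ∨ a = 1 ∨ a = 3 ∨ a = 4 ∨ a = 6) a ha ha2 ha5
    rcases hcases with rfl | rfl | rfl | rfl | rfl
    · exact Or.inl ⟨_, Or.inr rfl, (loc_adj e 0 5).mpr (by decide)⟩
    · exact Or.inl ⟨_, Or.inl rfl, (loc_adj e 1 2).mpr (by decide)⟩
    · exact Or.inl ⟨_, Or.inl rfl, (loc_adj e 3 2).mpr (by decide)⟩
    · have hd1 := loc_dist2 e (by decide : (tadpoleGraph 5 3).Adj 4 3)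
        (by decide : (tadpoleGraph 5 3).Adj 3 2) (by decide) (by decide)
      have hd2 := loc_dist2 e (by decide : (tadpoleGraph 5 3).Adj 4 0)
        (by decide : (tadpoleGraph 5 3).Adj 0 5) (by decide) (by decide)
      exact Or.inr ⟨_, Or.inl rfl, _, Or.inr rfl, (loc_inj e).ne (by decide), hd1, hd2⟩
    · exact Or.inl ⟨_, Or.inr rfl, (loc_adj e 6 5).mpr (by decide)⟩
  · have hd := loc_dist2 e (by decide : (tadpoleGraph 5 3).Adj 7 6)
      (by decide : (tadpoleGraph 5 3).Adj 6 5) (by decide) (by decide)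
    rw [hgv] at hd
    exact ⟨_, Or.inr rfl, hd⟩

lemma cert_c3 (hvP : v ∉ P) (e : G.induce (P ∪ {v}) ≃g SimpleGraph.cycleGraph 3) :
    ∃ S : Set V, S ⊆ P ∧ S.ncard = 0 ∧ P.ncard = 2 ∧
      (∀ x ∈ P, x ∉ S → Dom1 G v S x) := by
  set L := e ⟨v, Or.inr rfl⟩ with hLdef
  have hgv : gvert G v P e L = v := loc_v e
  refine ⟨∅, Set.empty_subset _, Set.ncard_empty _, ?_, ?_⟩
  · have := loc_card e hvP; omega
  · intro x hx hxS
    obtain ⟨a, ha, rfl⟩ := loc_surj e hvP hx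
    have hcases : a = L + 1 ∨ a = L + 2 :=
      (by decide : ∀ L a : Fin 3, a ≠ L → a = L + 1 ∨ a = L + 2) L a ha
    rcases hcases with rfl | rfl
    · have hadj := (loc_adj e (L+1) L).mpr
        ((by decide : ∀ L : Fin 3, (SimpleGraph.cycleGraph 3).Adj (L+1) L) L)
      rw [hgv] at hadj
      exact Or.inr (Or.inl hadj)
    · have hadj := (loc_adj e (L+2) L).mpr
        ((by decide : ∀ L : Fin 3, (SimpleGraph.cycleGraph 3).Adj (L+2) L) L)
      rw [hgv] at hadj
      exact Or.inr (Or.inl hadj)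

lemma cert_c5 (hvP : v ∉ P) (e : G.induce (P ∪ {v}) ≃g SimpleGraph.cycleGraph 5) :
    ∃ S : Set V, S ⊆ P ∧ S.ncard = 1 ∧ P.ncard = 4 ∧
      (∀ x ∈ P, x ∉ S → DomNeedy G v S x) := by
  set L := e ⟨v, Or.inr rfl⟩ with hLdef
  have hgv : gvert G v P e L = v := loc_v e
  refine ⟨{gvert G v P e (L + 2)}, ?_, Set.ncard_singleton _, ?_, ?_⟩
  · simp only [Set.singleton_subset_iff]
    exact loc_mem e ((by decide : ∀ L : Fin 5, L + 2 ≠ L) L)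
  · have := loc_card e hvP; omega
  · intro x hx hxS
    obtain ⟨a, ha, rfl⟩ := loc_surj e hvP hx
    have ha2 : a ≠ L + 2 := fun h => hxS (by rw [h]; exact rfl)
    have hcases : a = L + 1 ∨ a = L + 3 ∨ a = L + 4 :=
      (by decide : ∀ L a : Fin 5, a ≠ L → a ≠ L + 2 → a = L + 1 ∨ a = L + 3 ∨ a = L + 4) L a ha ha2
    rcases hcases with rfl | rfl | rfl
    · exact Or.inl (Or.inl ⟨_, rfl, (loc_adj e _ _).mpr
        ((by decide : ∀ L : Fin 5, (SimpleGraph.cycleGraph 5).Adj (L+1) (L+2)) L)⟩)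
    · exact Or.inl (Or.inl ⟨_, rfl, (loc_adj e _ _).mpr
        ((by decide : ∀ L : Fin 5, (SimpleGraph.cycleGraph 5).Adj (L+3) (L+2)) L)⟩)
    · have hadj := (loc_adj e (L+4) L).mpr
        ((by decide : ∀ L : Fin 5, (SimpleGraph.cycleGraph 5).Adj (L+4) L) L)
      rw [hgv] at hadj
      exact Or.inr ⟨hadj, _, rfl,
        loc_dist2 e
          ((by decide : ∀ L : Fin 5, (SimpleGraph.cycleGraph 5).Adj (L+4) (L+3)) L)
          ((by decide : ∀ L : Fin 5, (SimpleGraph.cycleGraph 5).Adj (L+3) (L+2)) L)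
          ((by decide : ∀ L : Fin 5, ¬ (SimpleGraph.cycleGraph 5).Adj (L+4) (L+2)) L)
          ((by decide : ∀ L : Fin 5, L + 4 ≠ L + 2) L)⟩

end Certs

structure CertData {V : Type*} (G : SimpleGraph V) (v : V) (P : Set V) where
  w : ℕ
  kind : ℕ
  S1 : Set V
  hS1 : S1 ⊆ P
  c1 : 3 * S1.ncard + w ≤ P.ncard
  d1 : ∀ x ∈ P, x ∉ S1 → Dom1 G v S1 x
  hk0 : kind = 0 → w = 2
  hk12 : kind = 1 ∨ kind = 2 → w = 1
  hk34 : kind = 3 ∨ kind = 4 → w = 0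
  hk : kind ≤ 4
  S2 : Set V
  hS2 : S2 ⊆ P
  c2 : 3 * S2.ncard ≤ P.ncard
  dB : kind = 1 ∨ kind = 4 → (∀ x ∈ P, x ∉ S2 → DomSelf G S2 x) ∧ (∃ u ∈ S2, G.dist v u = 2)
  dA : kind = 3 → (∀ x ∈ P, x ∉ S2 → DomSelf G S2 x) ∧ (∃ u ∈ S2, G.Adj v u)
  dN : kind = 2 → (∀ x ∈ P, x ∉ S2 → DomNeedy G v S2 x) ∧ S2.ncard = 1 ∧ P.ncard = 4
  S3 : Set V
  hS3 : S3 ⊆ P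
  d4 : kind = 4 → (∀ x ∈ P, x ∉ S3 → DomNeedy G v S3 x) ∧ (∃ u ∈ S3, G.Adj v u) ∧
    S3.ncard = 1 ∧ P.ncard = 3

lemma mkCert {V : Type*} {G : SimpleGraph V} {v : V} {P : Set V} (hvP : v ∉ P)
    (hG : (∃ s ∈ ({3, 4, 5} : Set ℕ), ∃ k ∈ ({1, 2, 3} : Set ℕ),
        ∃ e : G.induce (P ∪ {v}) ≃g tadpoleGraph s k,
          ((e ⟨v, Or.inr rfl⟩ : Fin (s + k)) : ℕ) = s + k - 1) ∨
      (∃ c ∈ ({3, 4, 5} : Set ℕ),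
        Nonempty (G.induce (P ∪ {v}) ≃g SimpleGraph.cycleGraph c))) :
    Nonempty (CertData G v P) := by
  rcases hG with ⟨s, hs, k, hk, e, hleaf⟩ | ⟨c, hc, ⟨e⟩⟩
  · simp only [Set.mem_insert_iff, Set.mem_singleton_iff] at hs hk
    rcases hs with rfl | rfl | rfl <;> rcases hk with rfl | rfl | rfl
    -- 3 1 : zA
    · obtain ⟨S, h1, h2, h3, h4, h5⟩ := cert_t31 hvP e hleaf
      exact ⟨⟨0, 3, S, h1, by omega, fun x hx hxS => (h4 x hx hxS).dom1,
        by omega, by omega, fun _ => rfl, by omega, S, h1, by omega,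
        by omega, fun _ => ⟨h4, h5⟩, by omega, S, h1, by omega⟩⟩
    -- 3 2 : oB
    · obtain ⟨S, h1, h2, h3, h4, h5⟩ := cert_t32 hvP e hleaf
      exact ⟨⟨1, 1, S, h1, by omega, fun x hx hxS => (h4 x hx hxS).dom1,
        by omega, fun _ => rfl, by omega, by omega, S, h1, by omega,
        fun _ => ⟨h4, h5⟩, by omega, by omega, S, h1, by omega⟩⟩
    -- 3 3 : big
    · obtain ⟨S, h1, h2, h3, h4⟩ := cert_t33 hvP e hleaf
      exact ⟨⟨2, 0, S, h1, by omega, h4,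
        fun _ => rfl, by omega, by omega, by omega, S, h1, by omega,
        by omega, by omega, by omega, S, h1, by omega⟩⟩
    -- 4 1 : oN
    · obtain ⟨S, h1, h2, h3, h4⟩ := cert_t41 hvP e hleaf
      exact ⟨⟨1, 2, S, h1, by omega, fun x hx hxS => (h4 x hx hxS).dom1,
        by omega, fun _ => rfl, by omega, by omega, S, h1, by omega,
        by omega, by omega, fun _ => ⟨h4, h2, h3⟩, S, h1, by omega⟩⟩
    -- 4 2 : big
    · obtain ⟨S, h1, h2, h3, h4⟩ := cert_t42 hvP e hleaf
      exact ⟨⟨2, 0, S, h1, by omega, h4,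
        fun _ => rfl, by omega, by omega, by omega, S, h1, by omega,
        by omega, by omega, by omega, S, h1, by omega⟩⟩
    -- 4 3 : zA
    · obtain ⟨S, h1, h2, h3, h4, h5⟩ := cert_t43 hvP e hleaf
      exact ⟨⟨0, 3, S, h1, by omega, fun x hx hxS => (h4 x hx hxS).dom1,
        by omega, by omega, fun _ => rfl, by omega, S, h1, by omega,
        by omega, fun _ => ⟨h4, h5⟩, by omega, S, h1, by omega⟩⟩
    -- 5 1 : big
    · obtain ⟨S, h1, h2, h3, h4⟩ := cert_t51 hvP e hleaf
      exact ⟨⟨2, 0, S, h1, by omega, h4,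
        fun _ => rfl, by omega, by omega, by omega, S, h1, by omega,
        by omega, by omega, by omega, S, h1, by omega⟩⟩
    -- 5 2 : zA
    · obtain ⟨S, h1, h2, h3, h4, h5⟩ := cert_t52 hvP e hleaf
      exact ⟨⟨0, 3, S, h1, by omega, fun x hx hxS => (h4 x hx hxS).dom1,
        by omega, by omega, fun _ => rfl, by omega, S, h1, by omega,
        by omega, fun _ => ⟨h4, h5⟩, by omega, S, h1, by omega⟩⟩
    -- 5 3 : oB
    · obtain ⟨S, h1, h2, h3, h4, h5⟩ := cert_t53 hvP e hleaf
      exact ⟨⟨1, 1, S, h1, by omega, fun x hx hxS => (h4 x hx hxS).dom1,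
        by omega, fun _ => rfl, by omega, by omega, S, h1, by omega,
        fun _ => ⟨h4, h5⟩, by omega, by omega, S, h1, by omega⟩⟩
  · simp only [Set.mem_insert_iff, Set.mem_singleton_iff] at hc
    rcases hc with rfl | rfl | rfl
    -- C3 : big
    · obtain ⟨S, h1, h2, h3, h4⟩ := cert_c3 hvP e
      exact ⟨⟨2, 0, S, h1, by omega, h4,
        fun _ => rfl, by omega, by omega, by omega, S, h1, by omega,
        by omega, by omega, by omega, S, h1, by omega⟩⟩
    -- C4 : zC4
    · obtain ⟨⟨S, h1, h2, h3, h4, h5⟩, ⟨T, g1, g2, g3, g4⟩⟩ := cert_c4 hvP e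
      exact ⟨⟨0, 4, S, h1, by omega, fun x hx hxS => (h4 x hx hxS).dom1,
        by omega, by omega, fun _ => rfl, by omega, S, h1, by omega,
        fun _ => ⟨h4, h5⟩, by omega, by omega, T, g1,
        fun _ => ⟨g3, g4, g2, h3⟩⟩⟩
    -- C5 : oN
    · obtain ⟨S, h1, h2, h3, h4⟩ := cert_c5 hvP e
      exact ⟨⟨1, 2, S, h1, by omega, fun x hx hxS => (h4 x hx hxS).dom1,
        by omega, fun _ => rfl, by omega, by omega, S, h1, by omega,
        by omega, by omega, fun _ => ⟨h4, h2, h3⟩, S, h1, by omega⟩⟩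

lemma ncard_iUnion_le' {V ι : Type*} [Fintype V] [Fintype ι] (S : ι → Set V) :
    (⋃ i, S i).ncard ≤ ∑ i, (S i).ncard := by
  classical
  rw [Set.ncard_eq_toFinset_card _ (Set.toFinite _)]
  have hsub : (Set.toFinite (⋃ i, S i)).toFinset ⊆
      Finset.univ.biUnion (fun i => (Set.toFinite (S i)).toFinset) := by
    intro x hx
    simp only [Set.Finite.mem_toFinset, Set.mem_iUnion] at hx
    obtain ⟨i, hi⟩ := hx
    exact Finset.mem_biUnion.mpr ⟨i, Finset.mem_univ _, (Set.Finite.mem_toFinset _).mpr hi⟩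
  calc _ ≤ _ := Finset.card_le_card hsub
    _ ≤ ∑ i, ((Set.toFinite (S i)).toFinset).card := Finset.card_biUnion_le
    _ = _ := Finset.sum_congr rfl (fun i _ => (Set.ncard_eq_toFinset_card _ _).symm)

lemma card_parts_ge {V ι : Type*} [Fintype V] [Fintype ι] (P : ι → Set V) (v : V)
    (hdisj : ∀ i j, i ≠ j → ∀ x, x ∈ P i → x ∈ P j → False)
    (hv : ∀ i, v ∉ P i) :
    1 + ∑ i, (P i).ncard ≤ Fintype.card V := by
  classical
  have hT : Finset.univ.biUnion (fun i => (Set.toFinite (P i)).toFinset) ⊆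
      Finset.univ.erase v := by
    intro x hx
    obtain ⟨i, _, hxi⟩ := Finset.mem_biUnion.mp hx
    rw [Set.Finite.mem_toFinset] at hxi
    exact Finset.mem_erase.mpr ⟨fun h => hv i (h ▸ hxi), Finset.mem_univ _⟩
  have hcard : ∑ i, (P i).ncard =
      (Finset.univ.biUnion (fun i => (Set.toFinite (P i)).toFinset)).card := by
    rw [Finset.card_biUnion]
    · exact Finset.sum_congr rfl (fun i _ => Set.ncard_eq_toFinset_card _ _)
    · intro i _ j _ hij
      simp only [Function.onFun]
      rw [Finset.disjoint_left]
      intro a ha1 ha2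
      rw [Set.Finite.mem_toFinset] at ha1 ha2
      exact hdisj i j hij a ha1 ha2
  have h2 := Finset.card_le_card hT
  rw [Finset.card_erase_of_mem (Finset.mem_univ v), Finset.card_univ] at h2
  have h3 : 1 ≤ Fintype.card V := Fintype.card_pos_iff.mpr ⟨v⟩
  omega

lemma card_parts_le {V ι : Type*} [Fintype V] [Fintype ι] (P : ι → Set V) (v : V)
    (hcov : ∀ w : V, w ≠ v → ∃ i, w ∈ P i) :
    Fintype.card V ≤ 1 + ∑ i, (P i).ncard := by
  classical
  have huniv : (Set.univ : Set V) ⊆ insert v (⋃ i, P i) := by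
    intro x _
    by_cases hx : x = v
    · exact Or.inl hx
    · obtain ⟨i, hi⟩ := hcov x hx
      exact Or.inr (Set.mem_iUnion.mpr ⟨i, hi⟩)
  calc Fintype.card V = (Set.univ : Set V).ncard := by
        rw [Set.ncard_univ, Nat.card_eq_fintype_card]
    _ ≤ (insert v (⋃ i, P i)).ncard := Set.ncard_le_ncard huniv (Set.toFinite _)
    _ ≤ 1 + (⋃ i, P i).ncard := by
        have := Set.ncard_insert_le v (⋃ i, P i)
        omega
    _ ≤ 1 + ∑ i, (P i).ncard := by
        have := ncard_iUnion_le' P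
        omega

theorem disjDomNum_le_third_of_gadgets {V : Type*} [Fintype V] (G : SimpleGraph V) (v : V)
    {ι : Type*} [Fintype ι] (P : ι → Set V)
    (hcov : ∀ w : V, w ≠ v → ∃! i : ι, w ∈ P i)
    (hv : ∀ i : ι, v ∉ P i)
    (hnum : 2 ≤ Fintype.card ι)
    (hsep : ∀ i j : ι, i ≠ j → ∀ a ∈ P i, ∀ b ∈ P j, ¬ G.Adj a b)
    (hgadget : ∀ i : ι,
      (∃ s ∈ ({3, 4, 5} : Set ℕ), ∃ k ∈ ({1, 2, 3} : Set ℕ),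
        ∃ e : G.induce (P i ∪ {v}) ≃g tadpoleGraph s k,
          ((e ⟨v, Or.inr rfl⟩ : Fin (s + k)) : ℕ) = s + k - 1) ∨
      (∃ c ∈ ({3, 4, 5} : Set ℕ),
        Nonempty (G.induce (P i ∪ {v}) ≃g SimpleGraph.cycleGraph c)))
    (hcard : 9 ≤ Fintype.card V) :
    (disjDomNum G : ℝ) ≤ (Fintype.card V : ℝ) / 3 := by
  classical
  have hcd : ∀ i, Nonempty (CertData G v (P i)) := fun i => mkCert (hv i) (hgadget i)
  have cd : ∀ i, CertData G v (P i) := fun i => (hcd i).some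
  have hdisj : ∀ i j, i ≠ j → ∀ x, x ∈ P i → x ∈ P j → False := by
    intro i j hij x hxi hxj
    have hxv : x ≠ v := fun h => hv i (h ▸ hxi)
    obtain ⟨u, _, huniq⟩ := hcov x hxv
    exact hij ((huniq i hxi).trans (huniq j hxj).symm)
  have hne_of_mem : ∀ {i j : ι} {a b : V}, i ≠ j → a ∈ P i → b ∈ P j → a ≠ b := by
    intro i j a b hij ha hb h
    exact hdisj i j hij a ha (h ▸ hb)
  have hcross : ∀ {i j : ι} {x a0 : V}, i ≠ j → x ∈ P i → a0 ∈ P j →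
      G.Adj x v → G.Adj v a0 → G.dist x a0 = 2 := by
    intro i j x a0 hij hx ha0 h1 h2
    exact dist_eq_two' h1 h2 (hsep i j hij x hx a0 ha0) (hne_of_mem hij hx ha0)
  have hsumge : 1 + ∑ i, (P i).ncard ≤ Fintype.card V := card_parts_ge P v hdisj hv
  have hbudget : ∀ (T : ι → Set V), (∀ i, 3 * (T i).ncard ≤ (P i).ncard) →
      3 * (⋃ i, T i).ncard ≤ Fintype.card V := by
    intro T hT
    have h1 := ncard_iUnion_le' T
    have h2 : ∑ i, 3 * (T i).ncard ≤ ∑ i, (P i).ncard := Finset.sum_le_sum (fun i _ => hT i)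
    have h3 : 3 * ∑ i, (T i).ncard = ∑ i, 3 * (T i).ncard := Finset.mul_sum _ _ _
    omega
  have main : ∃ D : Set V, IsDisjDomSet G D ∧ 3 * D.ncard ≤ Fintype.card V := by
    by_cases hA : 2 ≤ ∑ i, (cd i).w
    · refine ⟨{v} ∪ ⋃ i, (cd i).S1, ?_, ?_⟩
      · intro x hxD
        have hxv : x ≠ v := fun h => hxD (Or.inl h)
        obtain ⟨i, hxi, _⟩ := hcov x hxv
        have hxS : x ∉ (cd i).S1 := fun h => hxD (Or.inr (Set.mem_iUnion.mpr ⟨i, h⟩))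
        rcases (cd i).d1 x hxi hxS with ⟨u, hu, hadj⟩ | hadj | ⟨u, hu, w, hw, hne, hd1, hd2⟩
        · exact Or.inl ⟨u, Or.inr (Set.mem_iUnion.mpr ⟨i, hu⟩), hadj⟩
        · exact Or.inl ⟨v, Or.inl rfl, hadj⟩
        · refine Or.inr ⟨u, Or.inr (Set.mem_iUnion.mpr ⟨i, hu⟩), w, ?_, hne, hd1, hd2⟩
          rcases hw with hw | hw
          · exact Or.inr (Set.mem_iUnion.mpr ⟨i, hw⟩)
          · exact Or.inl hw
      · have h1 := Set.ncard_union_le ({v} : Set V) (⋃ i, (cd i).S1)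
        have h2 := ncard_iUnion_le' (fun i => (cd i).S1)
        have h3 : ({v} : Set V).ncard = 1 := Set.ncard_singleton v
        have hsum1 : ∑ i, (3 * (cd i).S1.ncard + (cd i).w) ≤ ∑ i, (P i).ncard :=
          Finset.sum_le_sum (fun i _ => (cd i).c1)
        rw [Finset.sum_add_distrib] at hsum1
        have h4 : ∑ i, 3 * (cd i).S1.ncard = 3 * ∑ i, (cd i).S1.ncard :=
          (Finset.mul_sum _ _ _).symm
        omega
    · have hw1 : ∑ i, (cd i).w ≤ 1 := by omega
      have hwle : ∀ i, (cd i).w ≤ 1 := by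
        intro i
        calc (cd i).w ≤ ∑ j, (cd j).w :=
              Finset.single_le_sum (f := fun j => (cd j).w) (fun _ _ => Nat.zero_le _)
                (Finset.mem_univ i)
          _ ≤ 1 := hw1
      have hkne0 : ∀ i, (cd i).kind ≠ 0 := fun i h => by
        have h1 := (cd i).hk0 h; have h2 := hwle i; omega
      have honeodd : ∀ i j, i ≠ j → (cd i).w = 1 → (cd j).w = 0 := by
        intro i j hij hwi
        have hle : ∑ k ∈ ({i, j} : Finset ι), (cd k).w ≤ ∑ k, (cd k).w :=
          Finset.sum_le_sum_of_subset (Finset.subset_univ _)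
        rw [Finset.sum_pair hij] at hle
        omega
      by_cases hN : ∃ i0, (cd i0).kind = 2
      · obtain ⟨i0, hki0⟩ := hN
        have hwi0 : (cd i0).w = 1 := (cd i0).hk12 (Or.inr hki0)
        have hk34 : ∀ j, j ≠ i0 → (cd j).kind = 3 ∨ (cd j).kind = 4 := by
          intro j hj
          have h0 := hkne0 j
          have hk4 := (cd j).hk
          have hw0 : (cd j).w = 0 := honeodd i0 j (Ne.symm hj) hwi0
          by_contra hcon
          push_neg at hcon
          have h12 : (cd j).kind = 1 ∨ (cd j).kind = 2 := by omega
          have := (cd j).hk12 h12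
          omega
        obtain ⟨hdomN, hcS2, hcP⟩ := (cd i0).dN hki0
        by_cases hA3 : ∃ j, j ≠ i0 ∧ (cd j).kind = 3
        · obtain ⟨j0, hj0, hkj0⟩ := hA3
          obtain ⟨hdomj0, a0, ha0S, ha0adj⟩ := (cd j0).dA hkj0
          refine ⟨⋃ i, (cd i).S2, ?_, hbudget _ (fun i => (cd i).c2)⟩
          intro x hxD
          by_cases hxv : x = v
          · subst hxv
            exact Or.inl ⟨a0, Set.mem_iUnion.mpr ⟨j0, ha0S⟩, ha0adj⟩
          obtain ⟨i, hxi, _⟩ := hcov x hxv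
          have hxS : x ∉ (cd i).S2 := fun h => hxD (Set.mem_iUnion.mpr ⟨i, h⟩)
          by_cases hii0 : i = i0
          · subst hii0
            rcases hdomN x hxi hxS with hself | ⟨hxadj, u, huS, hd⟩
            · rcases hself with ⟨u, hu, hadj⟩ | ⟨u, hu, w, hw, hne, h1, h2⟩
              · exact Or.inl ⟨u, Set.mem_iUnion.mpr ⟨i, hu⟩, hadj⟩
              · exact Or.inr ⟨u, Set.mem_iUnion.mpr ⟨i, hu⟩, w, Set.mem_iUnion.mpr ⟨i, hw⟩,
                  hne, h1, h2⟩
            · have hij0 : i ≠ j0 := Ne.symm hj0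
              exact Or.inr ⟨u, Set.mem_iUnion.mpr ⟨i, huS⟩, a0, Set.mem_iUnion.mpr ⟨j0, ha0S⟩,
                hne_of_mem hij0 ((cd i).hS2 huS) ((cd j0).hS2 ha0S), hd,
                hcross hij0 hxi ((cd j0).hS2 ha0S) hxadj ha0adj⟩
          · have hselfdom : ∀ y ∈ P i, y ∉ (cd i).S2 → DomSelf G ((cd i).S2) y := by
              rcases hk34 i hii0 with h | h
              · exact ((cd i).dA h).1
              · exact ((cd i).dB (Or.inr h)).1
            rcases hselfdom x hxi hxS with ⟨u, hu, hadj⟩ | ⟨u, hu, w, hw, hne, h1, h2⟩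
            · exact Or.inl ⟨u, Set.mem_iUnion.mpr ⟨i, hu⟩, hadj⟩
            · exact Or.inr ⟨u, Set.mem_iUnion.mpr ⟨i, hu⟩, w, Set.mem_iUnion.mpr ⟨i, hw⟩,
                hne, h1, h2⟩
        · have hk4all : ∀ j, j ≠ i0 → (cd j).kind = 4 := by
            intro j hj
            rcases hk34 j hj with h | h
            · exact absurd ⟨j, hj, h⟩ hA3
            · exact h
          have hsumle := card_parts_le P v (fun w hw => (hcov w hw).exists)
          have hconst : ∀ j ∈ Finset.univ.erase i0, (P j).ncard = 3 := fun j hj =>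
            ((cd j).d4 (hk4all j (Finset.ne_of_mem_erase hj))).2.2.2
          have hsplit : ∑ i, (P i).ncard = 4 + 3 * (Finset.univ.erase i0).card := by
            rw [← Finset.add_sum_erase _ _ (Finset.mem_univ i0), hcP]
            congr 1
            rw [Finset.sum_congr rfl hconst, Finset.sum_const, smul_eq_mul, mul_comm]
          have hcount : (Finset.univ.erase i0).card = Fintype.card ι - 1 := by
            rw [Finset.card_erase_of_mem (Finset.mem_univ _), Finset.card_univ]
          have hι1 : 1 ≤ Fintype.card ι := Fintype.card_pos_iff.mpr ⟨i0⟩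
          have hι3 : 3 ≤ Fintype.card ι := by omega
          have hpartner : ∀ i, ∃ j, j ≠ i0 ∧ j ≠ i ∧ (cd j).kind = 4 := by
            intro i
            have hns : ¬ (Finset.univ : Finset ι) ⊆ {i0, i} := by
              intro hsub
              have hc1 := Finset.card_le_card hsub
              have hc2 := Finset.card_insert_le i0 ({i} : Finset ι)
              rw [Finset.card_univ] at hc1
              rw [Finset.card_singleton] at hc2
              omega
            obtain ⟨j, _, hj⟩ := Finset.not_subset.mp hns
            rw [Finset.mem_insert, Finset.mem_singleton] at hj
            push_neg at hj
            exact ⟨j, hj.1, hj.2, hk4all j hj.1⟩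
          refine ⟨⋃ i, (if i = i0 then (cd i).S2 else (cd i).S3), ?_, ?_⟩
          · intro x hxD
            by_cases hxv : x = v
            · subst hxv
              obtain ⟨j, hji0, _, hkj⟩ := hpartner i0
              obtain ⟨_, ⟨a0, ha0, hadj⟩, _, _⟩ := (cd j).d4 hkj
              refine Or.inl ⟨a0, Set.mem_iUnion.mpr ⟨j, ?_⟩, hadj⟩
              rw [if_neg hji0]
              exact ha0
            · obtain ⟨i, hxi, _⟩ := hcov x hxv
              have hxS : x ∉ (if i = i0 then (cd i).S2 else (cd i).S3) := fun h =>
                hxD (Set.mem_iUnion.mpr ⟨i, h⟩)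
              by_cases hii0 : i = i0
              · subst hii0
                rw [if_pos rfl] at hxS
                rcases hdomN x hxi hxS with hself | ⟨hxadj, u, huS, hd⟩
                · rcases hself with ⟨u, hu, hadj⟩ | ⟨u, hu, w, hw, hne, h1, h2⟩
                  · refine Or.inl ⟨u, Set.mem_iUnion.mpr ⟨i, ?_⟩, hadj⟩
                    rw [if_pos rfl]; exact hu
                  · refine Or.inr ⟨u, Set.mem_iUnion.mpr ⟨i, ?_⟩, w,
                      Set.mem_iUnion.mpr ⟨i, ?_⟩, hne, h1, h2⟩
                    · rw [if_pos rfl]; exact hu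
                    · rw [if_pos rfl]; exact hw
                · obtain ⟨j, hji0, hji, hkj⟩ := hpartner i
                  obtain ⟨_, ⟨a0, ha0, hadj⟩, _, _⟩ := (cd j).d4 hkj
                  have hij : i ≠ j := Ne.symm hji
                  refine Or.inr ⟨u, Set.mem_iUnion.mpr ⟨i, ?_⟩, a0,
                    Set.mem_iUnion.mpr ⟨j, ?_⟩,
                    hne_of_mem hij ((cd i).hS2 huS) ((cd j).hS3 ha0), hd,
                    hcross hij hxi ((cd j).hS3 ha0) hxadj hadj⟩
                  · rw [if_pos rfl]; exact huS
                  · rw [if_neg hji0]; exact ha0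
              · rw [if_neg hii0] at hxS
                obtain ⟨hdom4, _, _, _⟩ := (cd i).d4 (hk4all i hii0)
                rcases hdom4 x hxi hxS with hself | ⟨hxadj, u, huS, hd⟩
                · rcases hself with ⟨u, hu, hadj⟩ | ⟨u, hu, w, hw, hne, h1, h2⟩
                  · refine Or.inl ⟨u, Set.mem_iUnion.mpr ⟨i, ?_⟩, hadj⟩
                    rw [if_neg hii0]; exact hu
                  · refine Or.inr ⟨u, Set.mem_iUnion.mpr ⟨i, ?_⟩, w,
                      Set.mem_iUnion.mpr ⟨i, ?_⟩, hne, h1, h2⟩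
                    · rw [if_neg hii0]; exact hu
                    · rw [if_neg hii0]; exact hw
                · obtain ⟨j, hji0, hji, hkj⟩ := hpartner i
                  obtain ⟨_, ⟨a0, ha0, hadj⟩, _, _⟩ := (cd j).d4 hkj
                  have hij : i ≠ j := Ne.symm hji
                  refine Or.inr ⟨u, Set.mem_iUnion.mpr ⟨i, ?_⟩, a0,
                    Set.mem_iUnion.mpr ⟨j, ?_⟩,
                    hne_of_mem hij ((cd i).hS3 huS) ((cd j).hS3 ha0), hd,
                    hcross hij hxi ((cd j).hS3 ha0) hxadj hadj⟩
                  · rw [if_neg hii0]; exact huS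
                  · rw [if_neg hji0]; exact ha0
          · apply hbudget
            intro i
            by_cases hii0 : i = i0
            · subst hii0
              rw [if_pos rfl, hcS2, hcP]
              omega
            · rw [if_neg hii0]
              obtain ⟨_, _, hc3, hp3⟩ := (cd i).d4 (hk4all i hii0)
              omega
      · push_neg at hN
        have hself : ∀ i, ∀ y ∈ P i, y ∉ (cd i).S2 → DomSelf G ((cd i).S2) y := by
          intro i
          have h0 := hkne0 i
          have hk4 := (cd i).hk
          have h2 := hN i
          rcases (by omega : (cd i).kind = 1 ∨ (cd i).kind = 3 ∨ (cd i).kind = 4) with h|h|h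
          · exact ((cd i).dB (Or.inl h)).1
          · exact ((cd i).dA h).1
          · exact ((cd i).dB (Or.inr h)).1
        refine ⟨⋃ i, (cd i).S2, ?_, hbudget _ (fun i => (cd i).c2)⟩
        intro x hxD
        by_cases hxv : x = v
        · subst hxv
          by_cases h3 : ∃ i, (cd i).kind = 3
          · obtain ⟨i, hki⟩ := h3
            obtain ⟨_, a0, ha0, hadj⟩ := (cd i).dA hki
            exact Or.inl ⟨a0, Set.mem_iUnion.mpr ⟨i, ha0⟩, hadj⟩
          · push_neg at h3
            have hflagB : ∀ i, ∃ u ∈ (cd i).S2, G.dist x u = 2 := by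
              intro i
              have h0 := hkne0 i
              have hk4 := (cd i).hk
              have h2 := hN i
              have h3' := h3 i
              rcases (by omega : (cd i).kind = 1 ∨ (cd i).kind = 4) with h|h
              · exact ((cd i).dB (Or.inl h)).2
              · exact ((cd i).dB (Or.inr h)).2
            obtain ⟨i, j, hij⟩ := Fintype.exists_pair_of_one_lt_card (α := ι) (by omega)
            obtain ⟨ui, hui, hdi⟩ := hflagB i
            obtain ⟨uj, huj, hdj⟩ := hflagB j
            exact Or.inr ⟨ui, Set.mem_iUnion.mpr ⟨i, hui⟩, uj, Set.mem_iUnion.mpr ⟨j, huj⟩,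
              hne_of_mem hij ((cd i).hS2 hui) ((cd j).hS2 huj), hdi, hdj⟩
        · obtain ⟨i, hxi, _⟩ := hcov x hxv
          have hxS : x ∉ (cd i).S2 := fun h => hxD (Set.mem_iUnion.mpr ⟨i, h⟩)
          rcases hself i x hxi hxS with ⟨u, hu, hadj⟩ | ⟨u, hu, w, hw, hne, h1, h2⟩
          · exact Or.inl ⟨u, Set.mem_iUnion.mpr ⟨i, hu⟩, hadj⟩
          · exact Or.inr ⟨u, Set.mem_iUnion.mpr ⟨i, hu⟩, w, Set.mem_iUnion.mpr ⟨i, hw⟩,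
              hne, h1, h2⟩
  obtain ⟨D, hD, hDc⟩ := main
  have h1 : disjDomNum G ≤ D.ncard := Nat.sInf_le ⟨D, hD, rfl⟩
  have h2 : 3 * disjDomNum G ≤ Fintype.card V := by
    have := Nat.mul_le_mul_left 3 h1
    omega
  rw [le_div_iff₀ (by norm_num : (0:ℝ) < 3)]
  exact_mod_cast (by omega : disjDomNum G * 3 ≤ Fintype.card V)
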